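/- In the braid group B₃, any word of the form σ₂^{k₁} σ₁^{l₁} ⋯ σ₂^{k_m} σ₁^{l_m} σ₂^n σ₁ with all kᵢ > 0, all lᵢ < 0, and n > 1, can be rewritten (using the braid relation) into a word in which the generator σ₁ occurs only with positive exponents. -/

import Mathlib

/-- The braid relation σ₁σ₂σ₁ = σ₂σ₁σ₂ as a relator in the free group on two generators. -/
def braidRels3 : Set (FreeGroup (Fin 2)) :=
  {FreeGroup.of 0 * FreeGroup.of 1 * FreeGroup.of 0 *
    (FreeGroup.of 1 * FreeGroup.of 0 * FreeGroup.of 1)⁻¹}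

/-- The braid group B₃ on three strands. -/
def B3 : Type := PresentedGroup braidRels3

instance : Group B3 := by unfold B3; infer_instance

/-- The standard generators σ₁ = σ 0 and σ₂ = σ 1 of B₃. -/
def σ (i : Fin 2) : B3 := PresentedGroup.of i

/-- Evaluate a signed word in the generators: `(i, true)` stands for `σ i`,
`(i, false)` for `(σ i)⁻¹`. -/
def evalWord (w : List (Fin 2 × Bool)) : B3 :=
  (w.map fun p => if p.2 then σ p.1 else (σ p.1)⁻¹).prod

/-- A word is 1-positive if the generator σ₁ (index 0) occurs in it, and only
with positive exponent. -/
def OnePositive (w : List (Fin 2 × Bool)) : Prop :=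
  ((0 : Fin 2), false) ∉ w ∧ ((0 : Fin 2), true) ∈ w

lemma braid : σ 0 * σ 1 * σ 0 = σ 1 * σ 0 * σ 1 := by
  have h : (PresentedGroup.mk braidRels3
      (FreeGroup.of 0 * FreeGroup.of 1 * FreeGroup.of 0 *
        (FreeGroup.of 1 * FreeGroup.of 0 * FreeGroup.of 1)⁻¹)) = 1 := by
    apply (QuotientGroup.eq_one_iff _).mpr
    exact Subgroup.subset_normalClosure rfl
  rw [map_mul, map_mul, map_inv, map_mul, map_mul] at h
  exact mul_inv_eq_one.mp h

local notation "a" => σ 0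
local notation "b" => σ 1

lemma h1 : (σ 0)⁻¹ * σ 1 * σ 0 = σ 1 * σ 0 * (σ 1)⁻¹ := by
  have e : (σ 0)⁻¹ * σ 1 * σ 0 = (σ 0)⁻¹ * (σ 1 * σ 0 * σ 1) * (σ 1)⁻¹ := by group
  rw [e, ← braid]; group

-- conjugation by a⁻¹ on b^d
lemma hconj (d : ℤ) : (σ 0)⁻¹ * (σ 1) ^ d * σ 0 = σ 1 * (σ 0) ^ d * (σ 1)⁻¹ := by
  have : (σ 0)⁻¹ * (σ 1) ^ d * σ 0 = ((σ 0)⁻¹ * σ 1 * ((σ 0)⁻¹)⁻¹) ^ d := by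
    rw [conj_zpow]; group
  rw [this, inv_inv, h1]
  rw [show σ 1 * σ 0 * (σ 1)⁻¹ = σ 1 * σ 0 * (σ 1)⁻¹ from rfl, conj_zpow]

lemma h2 : (σ 1 * σ 0)⁻¹ * σ 0 * (σ 1 * σ 0) = σ 1 := by
  have e : (σ 1 * σ 0)⁻¹ * σ 0 * (σ 1 * σ 0)
      = (σ 0)⁻¹ * (σ 1)⁻¹ * (σ 0 * σ 1 * σ 0) := by group
  rw [e, braid]; group

lemma L1 (z : ℤ) : (σ 0) ^ z * (σ 1 * σ 0) = (σ 1 * σ 0) * (σ 1) ^ z := by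
  have : (σ 1) ^ z = ((σ 1 * σ 0)⁻¹ * σ 0 * ((σ 1 * σ 0)⁻¹)⁻¹) ^ z := by
    rw [inv_inv, h2]
  rw [this, conj_zpow]; group

lemma step (l d : ℤ) :
    (σ 0) ^ l * (σ 1) ^ d * σ 0 =
      σ 1 * σ 0 * ((σ 1) ^ (l + 1) * ((σ 0) ^ (d - 1) * (σ 1)⁻¹)) := by
  have e1 : (σ 0) ^ l * (σ 1) ^ d * σ 0
      = (σ 0) ^ (l + 1) * ((σ 0)⁻¹ * (σ 1) ^ d * σ 0) := by group
  rw [e1, hconj]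
  have e2 : (σ 0) ^ (l + 1) * (σ 1 * (σ 0) ^ d * (σ 1)⁻¹)
      = ((σ 0) ^ (l + 1) * (σ 1 * σ 0)) * ((σ 0) ^ (d - 1) * (σ 1)⁻¹) := by group
  rw [e2, L1]; group

/-- word for `σ 1 ^ z` -/
def bword (z : ℤ) : List (Fin 2 × Bool) :=
  if 0 ≤ z then List.replicate z.toNat ((1 : Fin 2), true)
  else List.replicate (-z).toNat ((1 : Fin 2), false)

lemma evalWord_append (u v : List (Fin 2 × Bool)) :
    evalWord (u ++ v) = evalWord u * evalWord v := by
  simp [evalWord]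

lemma evalWord_cons (p : Fin 2 × Bool) (u : List (Fin 2 × Bool)) :
    evalWord (p :: u) = (if p.2 then σ p.1 else (σ p.1)⁻¹) * evalWord u := by
  simp [evalWord]

lemma evalWord_replicate_pos (i : Fin 2) (m : ℕ) :
    evalWord (List.replicate m (i, true)) = σ i ^ m := by
  simp [evalWord]

lemma evalWord_replicate_neg (i : Fin 2) (m : ℕ) :
    evalWord (List.replicate m (i, false)) = (σ i)⁻¹ ^ m := by
  simp [evalWord]

lemma evalWord_bword (z : ℤ) : evalWord (bword z) = σ 1 ^ z := by
  unfold bword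
  split
  · rw [evalWord_replicate_pos, ← zpow_natCast, Int.toNat_of_nonneg ‹_›]
  · rw [evalWord_replicate_neg, inv_pow, ← zpow_natCast,
      Int.toNat_of_nonneg (by omega), ← zpow_neg, neg_neg]

lemma not_mem_bword (z : ℤ) (t : Bool) : ((0 : Fin 2), t) ∉ bword z := by
  unfold bword
  split <;> simp [List.mem_replicate]

lemma main (L : List (ℤ × ℤ)) (hL : ∀ q ∈ L, 0 < q.1 ∧ q.2 < 0) :
    ∀ c : ℤ, 1 ≤ c →
    ∃ d : ℤ, 1 ≤ d ∧ ∃ u : List (Fin 2 × Bool), ((0 : Fin 2), false) ∉ u ∧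
      (L.map fun q => σ 1 ^ q.1 * σ 0 ^ q.2).prod * σ 1 ^ c * σ 0
        = σ 1 ^ d * (σ 0 * evalWord u) := by
  induction L with
  | nil =>
    intro c hc
    refine ⟨c, hc, [], by simp, ?_⟩
    show (List.map _ []).prod * σ 1 ^ c * σ 0 = _
    rw [List.map_nil, List.prod_nil]
    show (1 : B3) * σ 1 ^ c * σ 0 = σ 1 ^ c * (σ 0 * evalWord [])
    have : evalWord [] = 1 := by simp [evalWord]
    rw [this]; group
  | cons q L ih =>
    intro c hc
    obtain ⟨d, hd, u, hu, hequ⟩ :=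
      ih (fun q hq => hL q (List.mem_cons_of_mem _ hq)) c hc
    obtain ⟨hq1, hq2⟩ := hL q (List.mem_cons_self)
    refine ⟨q.1 + 1, by omega,
      bword (q.2 + 1) ++ (List.replicate (d - 1).toNat ((0 : Fin 2), true)
        ++ (((1 : Fin 2), false) :: u)), ?_, ?_⟩
    · intro h
      rcases List.mem_append.mp h with h | h
      · exact not_mem_bword _ _ h
      rcases List.mem_append.mp h with h | h
      · exact absurd (List.eq_of_mem_replicate h) (by simp)
      rcases List.mem_cons.mp h with h | h
      · exact absurd h (by simp)
      · exact hu h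
    · have hσ0 : (σ 0 : B3) ^ ((d - 1).toNat : ℤ) = σ 0 ^ (d - 1) := by
        rw [Int.toNat_of_nonneg (by omega)]
      rw [List.map_cons, List.prod_cons, evalWord_append, evalWord_append,
        evalWord_bword, evalWord_replicate_pos, evalWord_cons, ← zpow_natCast, hσ0]
      calc σ 1 ^ q.1 * σ 0 ^ q.2 * (List.map (fun q => σ 1 ^ q.1 * σ 0 ^ q.2) L).prod
            * σ 1 ^ c * σ 0
          = σ 1 ^ q.1 * σ 0 ^ q.2 *
            ((List.map (fun q => σ 1 ^ q.1 * σ 0 ^ q.2) L).prod * σ 1 ^ c * σ 0) := by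
            group
        _ = σ 1 ^ q.1 * σ 0 ^ q.2 * (σ 1 ^ d * (σ 0 * evalWord u)) := by rw [hequ]
        _ = σ 1 ^ q.1 * ((σ 0 ^ q.2 * σ 1 ^ d * σ 0) * evalWord u) := by group
        _ = σ 1 ^ q.1 * ((σ 1 * σ 0 * (σ 1 ^ (q.2 + 1) * (σ 0 ^ (d - 1) * (σ 1)⁻¹)))
              * evalWord u) := by rw [step]
        _ = σ 1 ^ (q.1 + 1) *
            (σ 0 * (σ 1 ^ (q.2 + 1) * (σ 0 ^ (d - 1) * ((if false then σ 1 else (σ 1)⁻¹) * evalWord u)))) := by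
            simp only [if_neg Bool.false_ne_true]
            group
        _ = _ := by norm_num

theorem stmt_11 (m : ℕ) (k l : Fin m → ℤ) (hk : ∀ i, 0 < k i) (hl : ∀ i, l i < 0)
    (n : ℤ) (hn : 1 < n) :
    ∃ w : List (Fin 2 × Bool), OnePositive w ∧
      evalWord w =
        ((List.finRange m).map fun i => (σ 1) ^ k i * (σ 0) ^ l i).prod *
          (σ 1) ^ n * σ 0 := by
  obtain ⟨d, hd, u, hu, hequ⟩ :=
    main ((List.finRange m).map fun i => (k i, l i))
      (by
        intro q hq
        rcases List.mem_map.mp hq with ⟨i, _, rfl⟩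
        exact ⟨hk i, hl i⟩)
      n (by omega)
  refine ⟨bword d ++ (((0 : Fin 2), true) :: u), ⟨?_, ?_⟩, ?_⟩
  · intro h
    rcases List.mem_append.mp h with h | h
    · exact not_mem_bword _ _ h
    rcases List.mem_cons.mp h with h | h
    · exact absurd h (by simp)
    · exact hu h
  · exact List.mem_append.mpr (Or.inr (List.mem_cons_self))
  · rw [evalWord_append, evalWord_bword, evalWord_cons]
    rw [List.map_map] at hequ
    have e : ((fun q : ℤ × ℤ => σ 1 ^ q.1 * σ 0 ^ q.2) ∘ fun i => (k i, l i))
        = fun i => σ 1 ^ k i * σ 0 ^ l i := rfl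
    rw [e] at hequ
    rw [hequ]
    norm_num
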